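/- For any point a in the closed unit ball of ℝ^5, the integral over the unit sphere S^4 of |x - a| with respect to 4-dimensional Hausdorff measure is minimized exactly when a = 0. -/

import Mathlib

open MeasureTheory Metric ENNReal NNReal

local notation "E5" => EuclideanSpace ℝ (Fin 5)
local notation "E4" => EuclideanSpace ℝ (Fin 4)

noncomputable def grS (y : E4) (z : ℝ) : E5 :=
  (EuclideanSpace.equiv (Fin 5) ℝ).symm (Fin.snoc y z)

noncomputable def prS (x : E5) : E4 :=
  (EuclideanSpace.equiv (Fin 4) ℝ).symm (Fin.init x)

lemma grS_norm_sq (y : E4) (z : ℝ) : ‖grS y z‖ ^ 2 = ‖y‖ ^ 2 + z ^ 2 := by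
  rw [EuclideanSpace.norm_eq, EuclideanSpace.norm_eq,
    Real.sq_sqrt (Finset.sum_nonneg fun i _ => sq_nonneg _),
    Real.sq_sqrt (Finset.sum_nonneg fun i _ => sq_nonneg _), Fin.sum_univ_castSucc]
  simp [grS, Fin.snoc]

lemma grS_sub (y y' : E4) (z z' : ℝ) : grS y z - grS y' z' = grS (y - y') (z - z') := by
  ext i
  refine Fin.lastCases ?_ (fun j => ?_) i <;> simp [grS, Fin.snoc]

lemma prS_grS (y : E4) (z : ℝ) : prS (grS y z) = y := by
  ext i
  show Fin.init (Fin.snoc y z : Fin 5 → ℝ) i = y i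
  simp

lemma grS_prS (x : E5) : grS (prS x) (x (Fin.last 4)) = x := by
  ext i
  refine Fin.lastCases ?_ (fun j => ?_) i
  · simp [prS, grS, Fin.snoc]
  · show (Fin.snoc (Fin.init x) (x (Fin.last 4)) : Fin 5 → ℝ) j.castSucc = x j.castSucc
    rw [Fin.snoc_castSucc]
    rfl

lemma prS_norm_le (x : E5) : ‖prS x‖ ≤ ‖x‖ := by
  rw [EuclideanSpace.norm_eq, EuclideanSpace.norm_eq]
  apply Real.sqrt_le_sqrt
  rw [Fin.sum_univ_castSucc (n := 4)]
  have h : ∀ i : Fin 4, prS x i = x i.castSucc := fun i => rfl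
  simp only [h]
  exact le_add_of_nonneg_right (by positivity)

lemma prS_sub (x x' : E5) : prS x - prS x' = prS (x - x') := by
  ext i; simp [prS, Fin.init]

lemma prS_lipschitz : LipschitzWith 1 prS := by
  apply LipschitzWith.of_dist_le_mul
  intro x y
  simp only [NNReal.coe_one, one_mul, dist_eq_norm, prS_sub]
  exact prS_norm_le _

/-- square root is Lipschitz away from 0 -/
lemma sqrt_lip {s t : ℝ} (hs : 1/9 ≤ s) (ht : 1/9 ≤ t) :
    |Real.sqrt s - Real.sqrt t| ≤ (3/2) * |s - t| := by
  have h0 : (0:ℝ) ≤ 1/9 := by norm_num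
  have hus : Real.sqrt s ^ 2 = s := Real.sq_sqrt (le_trans h0 hs)
  have hut : Real.sqrt t ^ 2 = t := Real.sq_sqrt (le_trans h0 ht)
  have h3s : (1/3 : ℝ) ≤ Real.sqrt s := by
    rw [show (1/3:ℝ) = Real.sqrt (1/9) by rw [show (1/9:ℝ) = (1/3)^2 by norm_num, Real.sqrt_sq]; norm_num]
    exact Real.sqrt_le_sqrt hs
  have h3t : (1/3 : ℝ) ≤ Real.sqrt t := by
    rw [show (1/3:ℝ) = Real.sqrt (1/9) by rw [show (1/9:ℝ) = (1/3)^2 by norm_num, Real.sqrt_sq]; norm_num]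
    exact Real.sqrt_le_sqrt ht
  rcases abs_cases (Real.sqrt s - Real.sqrt t) with ⟨he, hc⟩ | ⟨he, hc⟩ <;>
    rcases abs_cases (s - t) with ⟨he', hc'⟩ | ⟨he', hc'⟩ <;> rw [he, he'] <;> nlinarith

/-- the graph map on the cap -/
noncomputable def capF (y : E4) : E5 := grS y (Real.sqrt (1 - ‖y‖ ^ 2))

lemma capF_lip : LipschitzOnWith 4 capF {y : E4 | ‖y‖ ^ 2 ≤ 8/9} := by
  apply LipschitzOnWith.of_dist_le_mul
  intro y hy y' hy'
  simp only [Set.mem_setOf_eq] at hy hy'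
  have hy1 : ‖y‖ ≤ 1 := by nlinarith [norm_nonneg y]
  have hy1' : ‖y'‖ ≤ 1 := by nlinarith [norm_nonneg y']
  have hsq : |(1 - ‖y‖^2) - (1 - ‖y'‖^2)| ≤ 2 * ‖y - y'‖ := by
    have h1 : (1 - ‖y‖^2) - (1 - ‖y'‖^2) = (‖y'‖ + ‖y‖) * (‖y'‖ - ‖y‖) := by ring
    rw [h1, abs_mul]
    have h2 : |‖y'‖ - ‖y‖| ≤ ‖y' - y‖ := abs_norm_sub_norm_le _ _
    have h3 : |‖y'‖ + ‖y‖| ≤ 2 := by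
      rw [abs_of_nonneg (by positivity)]; linarith
    calc |‖y'‖ + ‖y‖| * |‖y'‖ - ‖y‖| ≤ 2 * ‖y' - y‖ := by
          apply mul_le_mul h3 h2 (abs_nonneg _) (by norm_num)
      _ = 2 * ‖y - y'‖ := by rw [norm_sub_rev]
  have hh : |Real.sqrt (1 - ‖y‖^2) - Real.sqrt (1 - ‖y'‖^2)| ≤ 3 * ‖y - y'‖ := by
    have := sqrt_lip (s := 1 - ‖y‖^2) (t := 1 - ‖y'‖^2) (by linarith) (by linarith)
    linarith
  have key : ‖capF y - capF y'‖ ^ 2 ≤ (4 * ‖y - y'‖)^2 := by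
    rw [capF, capF, grS_sub, grS_norm_sq]
    have h4 : (Real.sqrt (1 - ‖y‖^2) - Real.sqrt (1 - ‖y'‖^2))^2 ≤ (3 * ‖y - y'‖)^2 := by
      rw [← sq_abs]
      apply pow_le_pow_left₀ (abs_nonneg _) hh
    nlinarith [sq_nonneg ‖y - y'‖]
  have := le_of_pow_le_pow_left₀ (two_ne_zero) (by positivity : (0:ℝ) ≤ 4 * ‖y - y'‖) key
  rw [dist_eq_norm, dist_eq_norm]
  simpa using this

lemma haar4 : (μH[4] : Measure E4) = μH[Module.finrank ℝ E4] := by norm_num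

/-- the cap Stop has finite measure -/
lemma cap_fin : μH[4] {x : E5 | ‖x‖ = 1 ∧ 1/3 ≤ x (Fin.last 4)} < ⊤ := by
  set K : Set E4 := {y : E4 | ‖y‖ ^ 2 ≤ 8/9} with hK
  have hsub : {x : E5 | ‖x‖ = 1 ∧ 1/3 ≤ x (Fin.last 4)} ⊆ capF '' K := by
    rintro x ⟨hx1, hx2⟩
    refine ⟨prS x, ?_, ?_⟩
    · have h1 : ‖prS x‖^2 + (x (Fin.last 4))^2 = 1 := by
        rw [← grS_norm_sq, grS_prS, hx1]; norm_num
      have : (1/3:ℝ)^2 ≤ (x (Fin.last 4))^2 := by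
        apply pow_le_pow_left₀ (by norm_num) hx2
      simp only [hK, Set.mem_setOf_eq]
      nlinarith
    · rw [capF]
      have h1 : ‖prS x‖^2 + (x (Fin.last 4))^2 = 1 := by
        rw [← grS_norm_sq, grS_prS, hx1]; norm_num
      have h2 : 1 - ‖prS x‖^2 = (x (Fin.last 4))^2 := by linarith
      rw [h2, Real.sqrt_sq (by linarith), grS_prS]
  have hKc : IsCompact K := by
    have : K = closedBall (0:E4) (Real.sqrt (8/9)) := by
      ext y
      simp only [hK, Set.mem_setOf_eq, mem_closedBall, dist_zero_right]
      rw [show ‖y‖^2 ≤ 8/9 ↔ ‖y‖ ≤ Real.sqrt (8/9) from ?_]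
      constructor
      · intro h; rw [← Real.sqrt_sq (norm_nonneg y)]; exact Real.sqrt_le_sqrt h
      · intro h
        have := Real.sq_sqrt (by norm_num : (0:ℝ) ≤ 8/9)
        nlinarith [norm_nonneg y, Real.sqrt_nonneg (8/9 : ℝ)]
    rw [this]; exact isCompact_closedBall _ _
  calc μH[4] ({x : E5 | ‖x‖ = 1 ∧ 1/3 ≤ x (Fin.last 4)})
      ≤ μH[4] (capF '' K) := measure_mono hsub
    _ ≤ ((4:ℝ≥0) : ℝ≥0∞) ^ (4:ℝ) * μH[4] K := capF_lip.hausdorffMeasure_image_le (by norm_num)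
    _ < ⊤ := by
        apply ENNReal.mul_lt_top
        · exact ENNReal.rpow_lt_top_of_nonneg (by norm_num) ENNReal.coe_ne_top
        · rw [haar4]; exact hKc.measure_lt_top

lemma measurable_cap (c : ℝ) (i : Fin 5) :
    MeasurableSet {x : E5 | ‖x‖ = 1 ∧ c ≤ x i} := by
  apply MeasurableSet.inter
  · exact isClosed_eq (continuous_norm) continuous_const |>.measurableSet
  · exact isClosed_le continuous_const ((EuclideanSpace.proj i).continuous) |>.measurableSet

lemma measurable_cap' (c : ℝ) (i : Fin 5) :
    MeasurableSet {x : E5 | ‖x‖ = 1 ∧ x i ≤ c} := by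
  apply MeasurableSet.inter
  · exact isClosed_eq (continuous_norm) continuous_const |>.measurableSet
  · exact isClosed_le ((EuclideanSpace.proj i).continuous) continuous_const |>.measurableSet

lemma cap_i_eq (i : Fin 5) :
    μH[4] {x : E5 | ‖x‖ = 1 ∧ 1/3 ≤ x i} = μH[4] {x : E5 | ‖x‖ = 1 ∧ 1/3 ≤ x (Fin.last 4)} := by
  set e : E5 ≃ᵢ E5 :=
    (LinearIsometryEquiv.piLpCongrLeft 2 ℝ ℝ (Equiv.swap (Fin.last 4) i)).toIsometryEquiv
  have mp : MeasurePreserving e μH[4] μH[4] := e.measurePreserving_hausdorffMeasure _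
  have hpre : e ⁻¹' {x : E5 | ‖x‖ = 1 ∧ 1/3 ≤ x i} =
      {x : E5 | ‖x‖ = 1 ∧ 1/3 ≤ x (Fin.last 4)} := by
    ext x
    simp only [Set.mem_preimage, Set.mem_setOf_eq]
    have h1 : ‖e x‖ = ‖x‖ :=
      (LinearIsometryEquiv.piLpCongrLeft 2 ℝ ℝ (Equiv.swap (Fin.last 4) i)).norm_map x
    have h2 : (e x) i = x (Fin.last 4) := by
      show (LinearIsometryEquiv.piLpCongrLeft 2 ℝ ℝ (Equiv.swap (Fin.last 4) i)) x i
        = x (Fin.last 4)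
      rw [LinearIsometryEquiv.piLpCongrLeft_apply]
      rw [Equiv.piCongrLeft'_apply, Equiv.symm_swap, Equiv.swap_apply_right]
    rw [h1, h2]
  rw [← hpre, mp.measure_preimage (measurable_cap _ _).nullMeasurableSet]

lemma cap_i_neg_eq (i : Fin 5) :
    μH[4] {x : E5 | ‖x‖ = 1 ∧ x i ≤ -(1/3)} = μH[4] {x : E5 | ‖x‖ = 1 ∧ 1/3 ≤ x i} := by
  set e : E5 ≃ᵢ E5 := IsometryEquiv.neg E5
  have mp : MeasurePreserving e μH[4] μH[4] := e.measurePreserving_hausdorffMeasure _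
  have hpre : e ⁻¹' {x : E5 | ‖x‖ = 1 ∧ 1/3 ≤ x i} = {x : E5 | ‖x‖ = 1 ∧ x i ≤ -(1/3)} := by
    ext x
    simp only [Set.mem_preimage, Set.mem_setOf_eq]
    have h1 : e x = -x := rfl
    rw [h1, norm_neg]
    constructor
    · rintro ⟨h, h'⟩
      refine ⟨h, ?_⟩
      have : (-x) i = -(x i) := rfl
      rw [this] at h'
      linarith
    · rintro ⟨h, h'⟩
      refine ⟨h, ?_⟩
      have : (-x) i = -(x i) := rfl
      rw [this]
      linarith
  rw [← hpre, mp.measure_preimage (measurable_cap _ _).nullMeasurableSet]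

lemma sphere_fin : μH[4] (sphere (0:E5) 1) < ⊤ := by
  have hcover : sphere (0:E5) 1 ⊆
      ⋃ i : Fin 5, ({x : E5 | ‖x‖ = 1 ∧ 1/3 ≤ x i} ∪ {x : E5 | ‖x‖ = 1 ∧ x i ≤ -(1/3)}) := by
    intro x hx
    rw [mem_sphere_iff_norm, sub_zero] at hx
    have hsum : ∑ i, (x i)^2 = 1 := by
      have h2 : ‖x‖^2 = 1 := by rw [hx]; norm_num
      rw [EuclideanSpace.norm_eq, Real.sq_sqrt (Finset.sum_nonneg fun i _ => sq_nonneg _)] at h2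
      simpa [Real.norm_eq_abs, sq_abs] using h2
    have hex : ∃ i, (1/9 : ℝ) ≤ (x i)^2 := by
      by_contra h
      push_neg at h
      have : ∑ i, (x i)^2 < ∑ _i : Fin 5, (1/9:ℝ) :=
        Finset.sum_lt_sum_of_nonempty ⟨0, Finset.mem_univ 0⟩ (fun i _ => h i)
      simp only [Finset.sum_const, Finset.card_univ, Fintype.card_fin, nsmul_eq_mul] at this
      rw [hsum] at this
      norm_num at this
    obtain ⟨i, hi⟩ := hex
    have habs : (1/3 : ℝ) ≤ |x i| := by nlinarith [abs_nonneg (x i), sq_abs (x i)]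
    refine Set.mem_iUnion.2 ⟨i, ?_⟩
    rcases abs_cases (x i) with ⟨he, _⟩ | ⟨he, _⟩
    · left; exact ⟨hx, by linarith⟩
    · right; exact ⟨hx, by linarith⟩
  calc μH[4] (sphere (0:E5) 1)
      ≤ ∑' i : Fin 5, μH[4] ({x : E5 | ‖x‖ = 1 ∧ 1/3 ≤ x i} ∪ {x : E5 | ‖x‖ = 1 ∧ x i ≤ -(1/3)}) :=
        (measure_mono hcover).trans (measure_iUnion_le _)
    _ < ⊤ := by
        rw [tsum_fintype]
        refine ENNReal.sum_lt_top.2 (fun i _ => ?_)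
        apply lt_of_le_of_lt (measure_union_le _ _)
        rw [cap_i_neg_eq i, cap_i_eq i]
        exact ENNReal.add_lt_top.2 ⟨cap_fin, cap_fin⟩

lemma sphere_pos : 0 < μH[4] (sphere (0:E5) 1) := by
  have himg : ball (0:E4) 1 ⊆ prS '' (sphere (0:E5) 1) := by
    intro y hy
    rw [mem_ball, dist_zero_right] at hy
    have hcap : ‖capF y‖ = 1 := by
      have h2 : ‖capF y‖^2 = 1 := by
        rw [capF, grS_norm_sq, Real.sq_sqrt (by nlinarith [norm_nonneg y])]
        ring
      rw [← Real.sqrt_one, ← h2, Real.sqrt_sq (norm_nonneg _)]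
    refine ⟨capF y, ?_, prS_grS _ _⟩
    rwa [mem_sphere_iff_norm, sub_zero]
  have h1 : μH[4] (ball (0:E4) 1) ≤ μH[4] (prS '' (sphere (0:E5) 1)) := measure_mono himg
  have h2 : μH[4] (prS '' (sphere (0:E5) 1)) ≤
      ((1:ℝ≥0) : ℝ≥0∞) ^ (4:ℝ) * μH[4] (sphere (0:E5) 1) :=
    prS_lipschitz.hausdorffMeasure_image_le (by norm_num) _
  have h3 : 0 < μH[4] (ball (0:E4) 1) := by
    rw [haar4]; exact measure_ball_pos _ _ one_pos
  calc (0:ℝ≥0∞) < μH[4] (ball (0:E4) 1) := h3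
    _ ≤ ((1:ℝ≥0) : ℝ≥0∞) ^ (4:ℝ) * μH[4] (sphere (0:E5) 1) := h1.trans h2
    _ = μH[4] (sphere (0:E5) 1) := by simp

lemma hMH_singleton (z : E5) : μH[4] ({z} : Set E5) = 0 := by
  have hd : dimH ({z} : Set E5) < ((4:ℝ≥0) : ℝ≥0∞) := by
    rw [dimH_singleton]
    norm_num
  have := hausdorffMeasure_of_dimH_lt hd
  simpa using this

lemma eq_case {a x : E5} (ha : a ≠ 0) (hx : ‖x‖ = 1) (h : ‖x - a‖ + ‖x + a‖ = 2) :
    x = ‖a‖⁻¹ • a ∨ x = -(‖a‖⁻¹ • a) := by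
  have hray : SameRay ℝ (x - a) (x + a) := by
    rw [sameRay_iff_norm_add]
    have he : (x - a) + (x + a) = (2:ℝ) • x := by module
    rw [he, norm_smul, hx, h]
    norm_num
  have hdep : ∃ t : ℝ, a = t • x := by
    rcases hray with h0 | h0 | ⟨r₁, r₂, hr₁, hr₂, hre⟩
    · exact ⟨1, by rw [one_smul]; exact (sub_eq_zero.1 h0).symm⟩
    · refine ⟨-1, ?_⟩
      have : a = -x := by
        have := eq_neg_of_add_eq_zero_right h0
        linear_combination (norm := module) this
      rw [this]; module
    · refine ⟨(r₁ - r₂)/(r₁ + r₂), ?_⟩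
      have hda : (r₁ + r₂) • a = (r₁ - r₂) • x := by
        linear_combination (norm := module) -hre
      have hs : r₁ + r₂ ≠ 0 := by positivity
      have := congrArg (fun v => (r₁ + r₂)⁻¹ • v) hda
      simp only [smul_smul, inv_mul_cancel₀ hs, one_smul] at this
      rw [this, div_eq_inv_mul]
  obtain ⟨t, rfl⟩ := hdep
  have ht : t ≠ 0 := fun h0 => ha (by rw [h0, zero_smul])
  have hna : ‖t • x‖ = |t| := by
    rw [norm_smul, hx, mul_one, Real.norm_eq_abs]
  rcases lt_or_gt_of_ne ht with hneg | hpos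
  · right
    rw [hna, smul_smul, abs_of_neg hneg]
    have : -((-t)⁻¹ * t) = 1 := by field_simp
    rw [← neg_smul, this, one_smul]
  · left
    rw [hna, smul_smul, abs_of_pos hpos]
    rw [inv_mul_cancel₀ ht, one_smul]

theorem sphere_integral_dist_minimized_at_zero
    (a : EuclideanSpace ℝ (Fin 5)) (ha : a ∈ closedBall (0 : EuclideanSpace ℝ (Fin 5)) 1) :
    (∫ x in sphere (0 : EuclideanSpace ℝ (Fin 5)) 1,
        ‖x - (0 : EuclideanSpace ℝ (Fin 5))‖ ∂(μH[4])) ≤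
      (∫ x in sphere (0 : EuclideanSpace ℝ (Fin 5)) 1, ‖x - a‖ ∂(μH[4])) ∧
    ((∫ x in sphere (0 : EuclideanSpace ℝ (Fin 5)) 1, ‖x - a‖ ∂(μH[4])) =
        (∫ x in sphere (0 : EuclideanSpace ℝ (Fin 5)) 1,
          ‖x - (0 : EuclideanSpace ℝ (Fin 5))‖ ∂(μH[4])) ↔ a = 0) := by
  have hSm : MeasurableSet (sphere (0:E5) 1) := (isClosed_sphere).measurableSet
  set S : Set E5 := sphere (0:E5) 1 with hSdef
  set μ : Measure E5 := (μH[4] : Measure E5).restrict S with hμdef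
  haveI : IsFiniteMeasure μ := ⟨by rw [hμdef, Measure.restrict_apply_univ]; exact sphere_fin⟩
  have hnorm1 : ∀ x ∈ S, ‖x‖ = 1 := fun x hx => by
    rw [hSdef, mem_sphere_iff_norm, sub_zero] at hx; exact hx
  have hint : ∀ b : E5, Integrable (fun x => ‖x - b‖) μ := by
    intro b
    refine Integrable.mono' (integrable_const (1 + ‖b‖)) ?_ ?_
    · exact ((continuous_id.sub continuous_const).norm).aestronglyMeasurable
    · refine (ae_restrict_mem hSm).mono fun x hx => ?_
      rw [Real.norm_eq_abs, abs_of_nonneg (norm_nonneg _)]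
      calc ‖x - b‖ ≤ ‖x‖ + ‖b‖ := norm_sub_le _ _
        _ = 1 + ‖b‖ := by rw [hnorm1 x hx]
  have hint' : Integrable (fun x => ‖x + a‖) μ := by
    simpa [sub_neg_eq_add] using hint (-a)
  set m : ℝ := (μH[4] S).toReal with hmdef
  have hzero : (∫ x in S, ‖x - (0:E5)‖ ∂(μH[4] : Measure E5)) = m := by
    rw [setIntegral_congr_fun hSm (g := fun _ => (1:ℝ))
      (fun x hx => by rw [sub_zero]; exact hnorm1 x hx)]
    rw [setIntegral_const, smul_eq_mul, mul_one]
    exact (measureReal_def _ _).trans hmdef.symm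
  -- symmetry
  have mp : MeasurePreserving (fun x : E5 => -x) (μH[4] : Measure E5) μH[4] :=
    (IsometryEquiv.neg E5).measurePreserving_hausdorffMeasure _
  have hpre : (fun x : E5 => -x) ⁻¹' S = S := by
    ext x
    simp [hSdef, mem_sphere_iff_norm]
  have mp2 : MeasurePreserving (fun x : E5 => -x) μ μ := by
    have := mp.restrict_preimage hSm
    rwa [hpre, ← hμdef] at this
  have hemb : MeasurableEmbedding (fun x : E5 => -x) :=
    (Homeomorph.neg E5).measurableEmbedding
  have hsym : (∫ x in S, ‖x - a‖ ∂(μH[4] : Measure E5)) =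
      (∫ x in S, ‖x + a‖ ∂(μH[4] : Measure E5)) := by
    have := mp2.integral_comp hemb (fun x => ‖x - a‖)
    calc (∫ x in S, ‖x - a‖ ∂(μH[4] : Measure E5)) = ∫ x, ‖x - a‖ ∂μ := rfl
      _ = ∫ x, ‖(-x) - a‖ ∂μ := this.symm
      _ = ∫ x, ‖x + a‖ ∂μ := by
          congr 1; funext x
          rw [show -x - a = -(x + a) by module, norm_neg]
      _ = ∫ x in S, ‖x + a‖ ∂(μH[4] : Measure E5) := rfl
  have hge : ∀ x ∈ S, (2:ℝ) ≤ ‖x - a‖ + ‖x + a‖ := by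
    intro x hx
    have h1 : ‖(x - a) + (x + a)‖ ≤ ‖x - a‖ + ‖x + a‖ := norm_add_le _ _
    have he : (x - a) + (x + a) = (2:ℝ) • x := by module
    rw [he, norm_smul, hnorm1 x hx, mul_one, Real.norm_eq_abs] at h1
    rw [abs_of_nonneg (by norm_num : (0:ℝ) ≤ 2)] at h1
    exact h1
  have hintsum : Integrable (fun x => ‖x - a‖ + ‖x + a‖) μ := by
    have h := (hint a).add hint'
    exact h
  have hsum : (∫ x in S, ‖x - a‖ ∂(μH[4] : Measure E5)) +
      (∫ x in S, ‖x + a‖ ∂(μH[4] : Measure E5)) =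
      ∫ x in S, (‖x - a‖ + ‖x + a‖) ∂(μH[4] : Measure E5) :=
    (integral_add (hint a) hint').symm
  have hconst : (∫ _x in S, (2:ℝ) ∂(μH[4] : Measure E5)) = 2 * m := by
    rw [setIntegral_const, smul_eq_mul, mul_comm]
    exact congrArg (2 * ·) ((measureReal_def _ _).trans hmdef.symm)
  have hmono : (∫ _x in S, (2:ℝ) ∂(μH[4] : Measure E5)) ≤
      ∫ x in S, (‖x - a‖ + ‖x + a‖) ∂(μH[4] : Measure E5) :=
    setIntegral_mono_on (integrable_const 2) hintsum hSm hge
  have hineq : m ≤ ∫ x in S, ‖x - a‖ ∂(μH[4] : Measure E5) := by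
    rw [hconst, ← hsum, ← hsym] at hmono
    linarith
  refine ⟨by rw [hzero]; exact hineq, ?_, ?_⟩
  · intro heq
    rw [hzero] at heq
    by_contra hne
    -- equality case: derive contradiction
    have hfa : (∫ x in S, (‖x - a‖ + ‖x + a‖ - 2) ∂(μH[4] : Measure E5)) = 0 := by
      rw [integral_sub hintsum (integrable_const 2)]
      rw [← hsum, ← hsym, heq, hconst]
      ring
    have hnn : 0 ≤ᵐ[μ] (fun x => ‖x - a‖ + ‖x + a‖ - 2) := by
      refine (ae_restrict_mem hSm).mono fun x hx => ?_
      have := hge x hx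
      simp only [Pi.zero_apply]
      linarith
    have hae0 : (fun x => ‖x - a‖ + ‖x + a‖ - 2) =ᵐ[μ] 0 :=
      (integral_eq_zero_iff_of_nonneg_ae hnn
        (hintsum.sub (integrable_const 2))).1 hfa
    have haemem : ∀ᵐ x ∂μ, x ∈ ({‖a‖⁻¹ • a, -(‖a‖⁻¹ • a)} : Set E5) := by
      filter_upwards [ae_restrict_mem hSm, hae0] with x hx h0
      have h2 : ‖x - a‖ + ‖x + a‖ = 2 := by
        have := h0
        simp only [Pi.zero_apply] at this
        linarith
      rcases eq_case hne (hnorm1 x hx) h2 with h | h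
      · exact Or.inl h
      · exact Or.inr h
    have hc0 : μ (({‖a‖⁻¹ • a, -(‖a‖⁻¹ • a)} : Set E5)ᶜ) = 0 := ae_iff.1 haemem
    have hS0 : μH[4] S = 0 := by
      have h1 : μH[4] S = μ Set.univ := by rw [hμdef, Measure.restrict_apply_univ]
      have h2 : μ Set.univ ≤ μ ({‖a‖⁻¹ • a, -(‖a‖⁻¹ • a)} : Set E5) +
          μ (({‖a‖⁻¹ • a, -(‖a‖⁻¹ • a)} : Set E5)ᶜ) := by
        rw [← Set.union_compl_self ({‖a‖⁻¹ • a, -(‖a‖⁻¹ • a)} : Set E5)]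
        exact measure_union_le _ _
      have h3 : μ ({‖a‖⁻¹ • a, -(‖a‖⁻¹ • a)} : Set E5) ≤
          μH[4] ({‖a‖⁻¹ • a, -(‖a‖⁻¹ • a)} : Set E5) :=
        Measure.restrict_le_self _
      have h4 : μH[4] ({‖a‖⁻¹ • a, -(‖a‖⁻¹ • a)} : Set E5) = 0 := by
        rw [Set.insert_eq]
        refine le_antisymm ?_ zero_le
        refine le_trans (measure_union_le _ _) ?_
        rw [hMH_singleton, hMH_singleton]
        norm_num
      rw [h1]
      refine le_antisymm ?_ zero_le
      calc μ Set.univ ≤ μ ({‖a‖⁻¹ • a, -(‖a‖⁻¹ • a)} : Set E5) +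
          μ (({‖a‖⁻¹ • a, -(‖a‖⁻¹ • a)} : Set E5)ᶜ) := h2
        _ = μ ({‖a‖⁻¹ • a, -(‖a‖⁻¹ • a)} : Set E5) := by rw [hc0, add_zero]
        _ ≤ μH[4] ({‖a‖⁻¹ • a, -(‖a‖⁻¹ • a)} : Set E5) := h3
        _ = 0 := h4
    exact absurd hS0 sphere_pos.ne'
  · rintro rfl
    rfl
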